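/- Let W be a free abelian group with basis f₀,...,f_N and W₀ the subgroup generated by all differences f_i − f_j. Then ⋀^• W₀, viewed as a subalgebra of ⋀^• W, equals both the image and the kernel of the boundary derivation ∂ : ⋀^• W → ⋀^• W (with ∂f_i = 1): ⋀^• W₀ = Im ∂ = Ker ∂. -/
import Mathlib


/- Shared definitions: exterior algebra pairing, basis vectors, boundary operator,
   and elementary matroid notions (rank, looplessness) not present in this Mathlib. -/

open ExteriorAlgebra

set_option maxHeartbeats 1000000
set_option synthInstance.maxHeartbeats 400000

open Classical in
/-- `e_S`: sum of the standard basis vectors of `ℤ^n` indexed by `S`. -/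
noncomputable def eS {n : ℕ} (S : Set (Fin n)) : Fin n → ℤ := fun j => if j ∈ S then 1 else 0

/-- the `i`-th standard basis vector of `ℤ^n`. -/
noncomputable def fb {n : ℕ} (i : Fin n) : Fin n → ℤ := Pi.single i 1

/-- The pairing of a pure `k`-fold wedge `v₁ ∧ ... ∧ v_k` of vectors of `V` with the
exterior algebra of the dual module, determined by
`⟨w₁ ∧ ... ∧ w_k, v₁ ∧ ... ∧ v_k⟩ = det (wᵢ (vⱼ))` on the degree-`k` part and `0` on
other degrees. -/
noncomputable def pairPure {V : Type*} [AddCommGroup V] [Module ℤ V] (k : ℕ)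
    (v : Fin k → V) : ExteriorAlgebra ℤ (Module.Dual ℤ V) →ₗ[ℤ] ℤ :=
  ExteriorAlgebra.liftAlternating fun m =>
    if h : m = k then
      h ▸ (Matrix.detRowAlternating.compLinearMap
        (LinearMap.pi fun j : Fin k => LinearMap.applyₗ (v j)))
    else 0

/-- A matroid is loopless if every singleton of the ground set is independent. -/
def Matroid.Loopless' {α : Type*} (M : Matroid α) : Prop := ∀ x ∈ M.E, M.Indep {x}

/-- The rank of a set in a matroid: the largest cardinality of an independent subset. -/
noncomputable def Matroid.rk' {α : Type*} (M : Matroid α) (X : Set α) : ℕ :=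
  sSup {m : ℕ | ∃ I, I ⊆ X ∧ M.Indep I ∧ I.ncard = m}

/-- The boundary operator `∂` on `⋀^• W` for `W = ℤ^n` with basis `f_i`:
interior multiplication by the functional sending each `f_i` to `1`.  It is the odd
derivation with `∂ f_i = 1`. -/
noncomputable def bnd (n : ℕ) :
    ExteriorAlgebra ℤ (Fin n → ℤ) →ₗ[ℤ] ExteriorAlgebra ℤ (Fin n → ℤ) :=
  CliffordAlgebra.contractLeft (∑ i : Fin n, LinearMap.proj i)

/-- `F_I = f_{i₀} ∧ ... ∧ f_{i_k}` for a finite subset `I` (in increasing order). -/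
noncomputable def FI {n : ℕ} (I : Finset (Fin n)) : ExteriorAlgebra ℤ (Fin n → ℤ) :=
  ιMulti ℤ I.card fun j => fb ((I.orderIsoOfFin rfl j : I) : Fin n)

/-- The Orlik-Solomon ideal: the two-sided ideal (equivalently, the `ℤ`-span of all
`x * ∂F_I * y`) generated by the `∂ F_I` over dependent sets `I` of the matroid `M`. -/
noncomputable def OSideal {n : ℕ} (M : Matroid (Fin n)) :
    Submodule ℤ (ExteriorAlgebra ℤ (Fin n → ℤ)) :=
  Submodule.span ℤ {z | ∃ x, ∃ y, ∃ I : Finset (Fin n),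
    M.Dep (I : Set (Fin n)) ∧ z = x * bnd n (FI I) * y}

/-- Let `W = ℤ^{N+1}` with basis `f₀, ..., f_N` and `W₀` the subgroup
generated by the differences `fᵢ - fⱼ`.  Then `⋀^• W₀`, the subalgebra of `⋀^• W`
generated by `W₀`, equals both the image and the kernel of the boundary derivation
`∂` (with `∂ fᵢ = 1`):  `⋀^• W₀ = Im ∂ = Ker ∂`. -/
theorem aux_iota_mul_comm {R M : Type*} [CommRing R] [AddCommGroup M] [Module R M]
    (v : M) (x : ExteriorAlgebra R M) :
    ι R v * x = CliffordAlgebra.involute x * ι R v := by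
  induction x using ExteriorAlgebra.induction with
  | algebraMap r => rw [AlgHom.commutes, Algebra.commutes]
  | ι w =>
      rw [CliffordAlgebra.involute_ι, neg_mul, eq_neg_iff_add_eq_zero]
      exact ι_add_mul_swap v w
  | mul a b ha hb =>
      rw [← mul_assoc, ha, mul_assoc, hb, map_mul, mul_assoc]
  | add a b ha hb => rw [mul_add, ha, hb, map_add, add_mul]

theorem aux_contract_mul {R M : Type*} [CommRing R] [AddCommGroup M] [Module R M]
    (d : Module.Dual R M) (x : ExteriorAlgebra R M) : ∀ y : ExteriorAlgebra R M,
    CliffordAlgebra.contractLeft (Q := (0 : QuadraticForm R M)) d (x * y) =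
      CliffordAlgebra.contractLeft (Q := (0 : QuadraticForm R M)) d x * y +
        CliffordAlgebra.involute x *
          CliffordAlgebra.contractLeft (Q := (0 : QuadraticForm R M)) d y := by
  induction x using ExteriorAlgebra.induction with
  | algebraMap r =>
      intro y
      simp only [CliffordAlgebra.contractLeft_algebraMap_mul,
        CliffordAlgebra.contractLeft_algebraMap, zero_mul, zero_add, AlgHom.commutes,
        Algebra.smul_def]
  | ι w =>
      intro y
      rw [CliffordAlgebra.contractLeft_ι_mul, CliffordAlgebra.contractLeft_ι,
        CliffordAlgebra.involute_ι, Algebra.smul_def, neg_mul, sub_eq_add_neg]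
  | mul a b ha hb =>
      intro y
      rw [mul_assoc, ha, hb, ha, map_mul CliffordAlgebra.involute]
      noncomm_ring
  | add a b ha hb =>
      intro y
      rw [add_mul, map_add, ha, hb, map_add, add_mul, map_add, add_mul]
      abel

theorem stmt_19 {N : ℕ} :
    ((Algebra.adjoin ℤ ((ExteriorAlgebra.ι ℤ) ''
        (Submodule.span ℤ {w : Fin (N + 1) → ℤ | ∃ i j, w = fb i - fb j} :
          Set (Fin (N + 1) → ℤ))) : Subalgebra ℤ _) : Set _) =
        Set.range (bnd (N + 1)) ∧
    ((Algebra.adjoin ℤ ((ExteriorAlgebra.ι ℤ) ''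
        (Submodule.span ℤ {w : Fin (N + 1) → ℤ | ∃ i j, w = fb i - fb j} :
          Set (Fin (N + 1) → ℤ))) : Subalgebra ℤ _) : Set _) =
        {x | bnd (N + 1) x = 0} := by
  set μ : Module.Dual ℤ (Fin (N + 1) → ℤ) := ∑ i : Fin (N + 1), LinearMap.proj i with hμ
  have hbnd : ∀ x, bnd (N + 1) x =
      CliffordAlgebra.contractLeft (Q := (0 : QuadraticForm ℤ (Fin (N+1) → ℤ))) μ x :=
    fun x => rfl
  set W₀ : Submodule ℤ (Fin (N + 1) → ℤ) :=
    Submodule.span ℤ {w : Fin (N + 1) → ℤ | ∃ i j, w = fb i - fb j} with hW₀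
  set A : Subalgebra ℤ (ExteriorAlgebra ℤ (Fin (N + 1) → ℤ)) :=
    Algebra.adjoin ℤ ((ExteriorAlgebra.ι ℤ) '' (W₀ : Set (Fin (N + 1) → ℤ))) with hA
  -- μ of basis vectors
  have hμfb : ∀ i : Fin (N + 1), μ (fb i) = 1 := by
    intro i
    simp [hμ, fb, LinearMap.sum_apply, LinearMap.proj_apply, Pi.single_apply]
  -- μ vanishes on W₀
  have hμW0 : ∀ w ∈ W₀, μ w = 0 := by
    intro w hw
    induction hw using Submodule.span_induction with
    | mem x hx => obtain ⟨i, j, rfl⟩ := hx; rw [map_sub, hμfb, hμfb, sub_self]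
    | zero => exact map_zero μ
    | add x y _ _ hx hy => rw [map_add, hx, hy, add_zero]
    | smul c x _ hx => rw [map_smul, hx, smul_zero]
  -- A is contained in the kernel of ∂
  have hker : ∀ x ∈ A, bnd (N + 1) x = 0 := by
    intro x hx
    induction hx using Algebra.adjoin_induction with
    | mem x hx =>
        obtain ⟨w, hw, rfl⟩ := hx
        rw [hbnd, CliffordAlgebra.contractLeft_ι, hμW0 w hw, map_zero]
    | algebraMap r => rw [hbnd, CliffordAlgebra.contractLeft_algebraMap]
    | add x y _ _ hx hy => rw [map_add, hx, hy, add_zero]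
    | mul x y _ _ hx hy =>
        rw [hbnd] at hx hy ⊢
        rw [aux_contract_mul, hx, hy, zero_mul, mul_zero, add_zero]
  -- A is stable under involute
  have hinv : ∀ x ∈ A, CliffordAlgebra.involute x ∈ A := by
    intro x hx
    induction hx using Algebra.adjoin_induction with
    | mem x hx =>
        obtain ⟨w, hw, rfl⟩ := hx
        rw [CliffordAlgebra.involute_ι]
        exact neg_mem (Algebra.subset_adjoin ⟨w, hw, rfl⟩)
    | algebraMap r => rw [AlgHom.commutes]; exact algebraMap_mem A r
    | add x y _ _ hx hy => rw [map_add]; exact add_mem hx hy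
    | mul x y _ _ hx hy => rw [map_mul]; exact mul_mem hx hy
  -- anticommutation with f₀
  have hbf : ∀ c : ExteriorAlgebra ℤ (Fin (N + 1) → ℤ),
      c * ι ℤ (fb 0) = ι ℤ (fb 0) * CliffordAlgebra.involute c := by
    intro c
    have h := aux_iota_mul_comm (fb (0 : Fin (N + 1))) (CliffordAlgebra.involute c)
    rw [CliffordAlgebra.involute_involute] at h
    exact h.symm
  -- decomposition x = b + f₀ * a with a, b ∈ A
  have hdec : ∀ x : ExteriorAlgebra ℤ (Fin (N + 1) → ℤ),
      ∃ a ∈ A, ∃ b ∈ A, x = b + ι ℤ (fb 0) * a := by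
    intro x
    induction x using ExteriorAlgebra.induction with
    | algebraMap r =>
        exact ⟨0, zero_mem A, algebraMap ℤ _ r, algebraMap_mem A r, by rw [mul_zero, add_zero]⟩
    | ι v =>
        refine ⟨algebraMap ℤ _ (∑ i, v i), algebraMap_mem A _,
          ι ℤ (v - (∑ i, v i) • fb 0), ?_, ?_⟩
        · apply Algebra.subset_adjoin
          refine ⟨v - (∑ i, v i) • fb 0, ?_, rfl⟩
          have hv : v - (∑ i, v i) • fb 0 = ∑ i, v i • (fb i - fb 0) := by
            have h1 : ∑ i, v i • fb i = v := by
              funext j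
              simp [fb, Pi.single_apply]
            calc v - (∑ i, v i) • fb 0 = (∑ i, v i • fb i) - (∑ i, v i) • fb 0 := by rw [h1]
              _ = ∑ i, (v i • fb i - v i • fb 0) := by
                  rw [Finset.sum_sub_distrib, Finset.sum_smul]
              _ = ∑ i, v i • (fb i - fb 0) := by simp [smul_sub]
          rw [hv]
          exact Submodule.sum_mem _ fun i _ =>
            Submodule.smul_mem _ _ (Submodule.subset_span ⟨i, 0, rfl⟩)
        · rw [← Algebra.commutes, ← Algebra.smul_def, ← map_smul, ← map_add, sub_add_cancel]
    | mul x y hx hy =>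
        obtain ⟨a, ha, b, hb, rfl⟩ := hx
        obtain ⟨a', ha', b', hb', rfl⟩ := hy
        refine ⟨CliffordAlgebra.involute b * a' + a * b',
          add_mem (mul_mem (hinv b hb) ha') (mul_mem ha hb'), b * b', mul_mem hb hb', ?_⟩
        have h1 : b * (ι ℤ (fb 0) * a') = ι ℤ (fb 0) * (CliffordAlgebra.involute b * a') := by
          rw [← mul_assoc, hbf b, mul_assoc]
        have h2 : (ι ℤ (fb 0) * a) * (ι ℤ (fb 0) * a') = 0 := by
          have : a * (ι ℤ (fb 0) * a') = ι ℤ (fb 0) * (CliffordAlgebra.involute a * a') := by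
            rw [← mul_assoc, hbf a, mul_assoc]
          rw [mul_assoc, this, ← mul_assoc, ι_sq_zero, zero_mul]
        rw [add_mul, mul_add, mul_add, h1, h2, add_zero, mul_assoc, mul_add, add_assoc]
    | add x y hx hy =>
        obtain ⟨a, ha, b, hb, rfl⟩ := hx
        obtain ⟨a', ha', b', hb', rfl⟩ := hy
        exact ⟨a + a', add_mem ha ha', b + b', add_mem hb hb', by rw [mul_add]; abel⟩
  -- the kernel equality
  have hAK : (A : Set (ExteriorAlgebra ℤ (Fin (N + 1) → ℤ))) = {x | bnd (N + 1) x = 0} := by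
    ext x
    constructor
    · exact fun hx => hker x hx
    · intro hx
      obtain ⟨a, ha, b, hb, rfl⟩ := hdec x
      have hx' : bnd (N + 1) (b + ι ℤ (fb 0) * a) = a := by
        rw [map_add, hker b hb, zero_add, hbnd, CliffordAlgebra.contractLeft_ι_mul,
          ← hbnd, hker a ha, mul_zero, sub_zero, hμfb, one_smul]
      have ha0 : a = 0 := by rw [← hx', hx]
      rw [ha0, mul_zero, add_zero]
      exact hb
  refine ⟨?_, hAK⟩
  ext x
  constructor
  · intro hx
    refine ⟨ι ℤ (fb 0) * x, ?_⟩
    rw [hbnd, CliffordAlgebra.contractLeft_ι_mul, ← hbnd, hker x hx, mul_zero, sub_zero,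
      hμfb, one_smul]
  · rintro ⟨y, rfl⟩
    have : bnd (N + 1) (bnd (N + 1) y) = 0 := by
      rw [hbnd, hbnd, CliffordAlgebra.contractLeft_contractLeft]
    rw [hAK]
    exact this
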